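/- arXiv:2604.27877 — 2 statements merged into one kernel-verified Lean document; each statement's English description precedes it below -/
import Mathlib

section
/- Let X : [0,T] → ℝ be C¹ with |X'| ≥ c > 0, let θ_E > 0, θ̃ > 0, C₀ ≥ 0, and let ℰ : [0,T] → ℝ be continuous with ℰ(r) ≤ −θ_E + C₀ e^{−θ̃|X(r)|} for all r. Then for all 0 ≤ s ≤ t ≤ T one has ∫_s^t ℰ(r) dr ≤ −θ_E (t − s) + 2C₀/(cθ̃). -/
open Set intervalIntegral Real

lemma int_exp_mul (θ a b : ℝ) (hθ : θ ≠ 0) :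
    ∫ u in a..b, Real.exp (θ * u) = (Real.exp (θ * b) - Real.exp (θ * a)) / θ := by
  have h : ∀ u ∈ Set.uIcc a b, HasDerivAt (fun u => Real.exp (θ * u) / θ) (Real.exp (θ * u)) u := by
    intro u _
    have h1 : HasDerivAt (fun u => Real.exp (θ * u)) (Real.exp (θ * u) * θ) u := by
      simpa using ((hasDerivAt_id u).const_mul θ).exp
    simpa [mul_div_assoc, mul_div_cancel_right₀ _ hθ] using h1.div_const θ
  rw [intervalIntegral.integral_eq_sub_of_hasDerivAt h
    ((Real.continuous_exp.comp (continuous_const.mul continuous_id)).intervalIntegrable a b)]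
  ring

lemma exp_abs_int_le {θ : ℝ} (hθ : 0 < θ) {a b : ℝ} (hab : a ≤ b) :
    ∫ u in a..b, Real.exp (-θ * |u|) ≤ 2 / θ := by
  have hcont : Continuous fun u : ℝ => Real.exp (-θ * |u|) := by fun_prop
  have hθ' : θ ≠ 0 := hθ.ne'
  have h1θ : 0 ≤ 1 / θ := by positivity
  have key : ∀ x y : ℝ, x ≤ y → y ≤ 0 → ∫ u in x..y, Real.exp (-θ * |u|) ≤ 1 / θ := by
    intro x y hxy hy
    have heq : ∫ u in x..y, Real.exp (-θ * |u|) = ∫ u in x..y, Real.exp (θ * u) := by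
      apply intervalIntegral.integral_congr
      intro u hu
      rw [Set.uIcc_of_le hxy] at hu
      show Real.exp (-θ * |u|) = Real.exp (θ * u)
      rw [abs_of_nonpos (hu.2.trans hy)]; ring_nf
    rw [heq, int_exp_mul θ x y hθ']
    have h1 : Real.exp (θ * y) ≤ 1 :=
      Real.exp_le_one_iff.mpr (mul_nonpos_of_nonneg_of_nonpos hθ.le hy)
    have h2 : 0 < Real.exp (θ * x) := Real.exp_pos _
    gcongr
    linarith
  have key2 : ∀ x y : ℝ, x ≤ y → 0 ≤ x → ∫ u in x..y, Real.exp (-θ * |u|) ≤ 1 / θ := by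
    intro x y hxy hx
    have heq : ∫ u in x..y, Real.exp (-θ * |u|) = ∫ u in x..y, Real.exp (-θ * u) := by
      apply intervalIntegral.integral_congr
      intro u hu
      rw [Set.uIcc_of_le hxy] at hu
      show Real.exp (-θ * |u|) = Real.exp (-θ * u)
      rw [abs_of_nonneg (hx.trans hu.1)]
    rw [heq, int_exp_mul (-θ) x y (neg_ne_zero.mpr hθ'), div_neg, ← neg_div, neg_sub]
    have h1 : Real.exp (-θ * x) ≤ 1 :=
      Real.exp_le_one_iff.mpr (mul_nonpos_of_nonpos_of_nonneg (neg_nonpos.mpr hθ.le) hx)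
    have h2 : 0 < Real.exp (-θ * y) := Real.exp_pos _
    gcongr
    linarith
  rcases le_or_gt b 0 with hb | hb
  · calc ∫ u in a..b, Real.exp (-θ * |u|) ≤ 1 / θ := key a b hab hb
      _ ≤ 2 / θ := by rw [div_le_div_iff₀ hθ hθ]; nlinarith
  rcases le_or_gt 0 a with ha | ha
  · calc ∫ u in a..b, Real.exp (-θ * |u|) ≤ 1 / θ := key2 a b hab ha
      _ ≤ 2 / θ := by rw [div_le_div_iff₀ hθ hθ]; nlinarith
  · have hsplit : ∫ u in a..b, Real.exp (-θ * |u|) =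
        (∫ u in a..(0:ℝ), Real.exp (-θ * |u|)) + ∫ u in (0:ℝ)..b, Real.exp (-θ * |u|) :=
      (intervalIntegral.integral_add_adjacent_intervals
        (hcont.intervalIntegrable _ _) (hcont.intervalIntegrable _ _)).symm
    rw [hsplit]
    have := key a 0 ha.le le_rfl
    have := key2 0 b hb.le le_rfl
    have : (1:ℝ)/θ + 1/θ = 2/θ := by ring
    linarith [key a 0 ha.le le_rfl, key2 0 b hb.le le_rfl]

lemma core_estimate
    (T c θE θt C₀ : ℝ) (hc : 0 < c) (hθE : 0 < θE) (hθt : 0 < θt) (hC₀ : 0 ≤ C₀)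
    (X X' E : ℝ → ℝ)
    (hderiv : ∀ r ∈ Set.Icc 0 T, HasDerivAt X (X' r) r)
    (hXcont : ContinuousOn X' (Set.Icc 0 T))
    (hpos : ∀ r ∈ Set.Icc 0 T, c ≤ X' r)
    (hEcont : ContinuousOn E (Set.Icc 0 T))
    (hE : ∀ r ∈ Set.Icc 0 T, E r ≤ -θE + C₀ * Real.exp (-θt * |X r|))
    (s t : ℝ) (hs : 0 ≤ s) (hst : s ≤ t) (ht : t ≤ T) :
    ∫ r in s..t, E r ≤ -θE * (t - s) + 2 * C₀ / (c * θt) := by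
  have hsub : Set.Icc s t ⊆ Set.Icc 0 T := Set.Icc_subset_Icc hs ht
  have huIcc : Set.uIcc s t = Set.Icc s t := Set.uIcc_of_le hst
  have hXc : ContinuousOn X (Set.Icc s t) := fun r hr =>
    (hderiv r (hsub hr)).continuousAt.continuousWithinAt
  have hg : Continuous fun u : ℝ => Real.exp (-θt * |u|) := by fun_prop
  -- the comparison function
  set G : ℝ → ℝ := fun r => Real.exp (-θt * |X r|) with hG
  have hGc : ContinuousOn G (Set.Icc s t) := hg.comp_continuousOn hXc
  have hGint : IntervalIntegrable G MeasureTheory.volume s t := by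
    rw [intervalIntegrable_iff_integrableOn_Icc_of_le hst]
    exact hGc.integrableOn_compact isCompact_Icc
  have hGnonneg : ∀ r, 0 ≤ G r := fun r => (Real.exp_pos _).le
  -- Step 1: bound E by -θE + C₀ * G
  have hEint : IntervalIntegrable E MeasureTheory.volume s t := by
    rw [intervalIntegrable_iff_integrableOn_Icc_of_le hst]
    exact (hEcont.mono hsub).integrableOn_compact isCompact_Icc
  have hRHSint : IntervalIntegrable (fun r => -θE + C₀ * G r) MeasureTheory.volume s t :=
    (_root_.intervalIntegrable_const).add (hGint.const_mul C₀)
  have step1 : ∫ r in s..t, E r ≤ ∫ r in s..t, (-θE + C₀ * G r) :=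
    intervalIntegral.integral_mono_on hst hEint hRHSint fun r hr => hE r (hsub hr)
  have step2 : ∫ r in s..t, (-θE + C₀ * G r) = -θE * (t - s) + C₀ * ∫ r in s..t, G r := by
    rw [intervalIntegral.integral_add _root_.intervalIntegrable_const (hGint.const_mul C₀),
      intervalIntegral.integral_const, intervalIntegral.integral_const_mul]
    simp only [smul_eq_mul]
    ring
  -- Step 3: G ≤ (1/c) * (X' * G)
  have hX'Gint : IntervalIntegrable (fun r => X' r * G r) MeasureTheory.volume s t := by
    rw [intervalIntegrable_iff_integrableOn_Icc_of_le hst]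
    exact ((hXcont.mono hsub).mul hGc).integrableOn_compact isCompact_Icc
  have step3 : ∫ r in s..t, G r ≤ (1/c) * ∫ r in s..t, X' r * G r := by
    rw [← intervalIntegral.integral_const_mul]
    apply intervalIntegral.integral_mono_on hst hGint (hX'Gint.const_mul _)
    intro r hr
    have h1 : c ≤ X' r := hpos r (hsub hr)
    have h2 : 0 ≤ G r := hGnonneg r
    have hcinv : 1 ≤ 1 / c * X' r := by
      rw [div_mul_eq_mul_div, one_mul, le_div_iff₀ hc, one_mul]; exact h1
    calc G r = 1 * G r := (one_mul _).symm
      _ ≤ 1 / c * X' r * G r := mul_le_mul_of_nonneg_right hcinv h2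
      _ = 1 / c * (X' r * G r) := by ring
  -- Step 4: change of variables
  have step4 : ∫ r in s..t, X' r * G r = ∫ u in (X s)..(X t), Real.exp (-θt * |u|) := by
    have := intervalIntegral.integral_comp_smul_deriv
      (f := X) (f' := X') (g := fun u => Real.exp (-θt * |u|)) (a := s) (b := t)
      (fun r hr => hderiv r (hsub (huIcc ▸ hr)))
      (by rw [huIcc]; exact hXcont.mono hsub) hg
    simpa only [smul_eq_mul, Function.comp] using this
  -- Step 5: X s ≤ X t
  have hXst : X s ≤ X t := by
    have hftc : ∫ r in s..t, X' r = X t - X s :=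
      intervalIntegral.integral_eq_sub_of_hasDerivAt
        (fun r hr => hderiv r (hsub (huIcc ▸ hr)))
        (by rw [intervalIntegrable_iff_integrableOn_Icc_of_le hst]
            exact (hXcont.mono hsub).integrableOn_compact isCompact_Icc)
    have hnn : 0 ≤ ∫ r in s..t, X' r :=
      intervalIntegral.integral_nonneg hst fun r hr => hc.le.trans (hpos r (hsub hr))
    linarith [hftc ▸ hnn]
  have step6 : ∫ u in (X s)..(X t), Real.exp (-θt * |u|) ≤ 2 / θt := exp_abs_int_le hθt hXst
  -- Combine
  have hGle : ∫ r in s..t, G r ≤ 2 / (c * θt) := by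
    calc ∫ r in s..t, G r ≤ (1/c) * ∫ r in s..t, X' r * G r := step3
      _ = (1/c) * ∫ u in (X s)..(X t), Real.exp (-θt * |u|) := by rw [step4]
      _ ≤ (1/c) * (2/θt) := by
          apply mul_le_mul_of_nonneg_left step6 (by positivity)
      _ = 2 / (c * θt) := by field_simp
  calc ∫ r in s..t, E r ≤ -θE * (t - s) + C₀ * ∫ r in s..t, G r := by rw [← step2]; exact step1
    _ ≤ -θE * (t - s) + C₀ * (2 / (c * θt)) := by
        have := mul_le_mul_of_nonneg_left hGle hC₀
        linarith
    _ = -θE * (t - s) + 2 * C₀ / (c * θt) := by ring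

theorem accumulated_damping_estimate
    (T c θE θt C₀ : ℝ) (hT : 0 ≤ T) (hc : 0 < c) (hθE : 0 < θE) (hθt : 0 < θt)
    (hC₀ : 0 ≤ C₀)
    (X X' E : ℝ → ℝ)
    (hderiv : ∀ r ∈ Set.Icc 0 T, HasDerivAt X (X' r) r)
    (hXcont : ContinuousOn X' (Set.Icc 0 T))
    (hbound : ∀ r ∈ Set.Icc 0 T, c ≤ |X' r|)
    (hEcont : ContinuousOn E (Set.Icc 0 T))
    (hE : ∀ r ∈ Set.Icc 0 T, E r ≤ -θE + C₀ * Real.exp (-θt * |X r|)) :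
    ∀ s t, 0 ≤ s → s ≤ t → t ≤ T →
      ∫ r in s..t, E r ≤ -θE * (t - s) + 2 * C₀ / (c * θt) := by
  -- sign dichotomy for X'
  have h0T : (0:ℝ) ∈ Set.Icc 0 T := ⟨le_rfl, hT⟩
  have hcases : ∀ r ∈ Set.Icc 0 T, c ≤ X' r ∨ X' r ≤ -c := by
    intro r hr
    rcases abs_cases (X' r) with ⟨h, _⟩ | ⟨h, _⟩
    · left; rw [← h]; exact hbound r hr
    · right; have := hbound r hr; rw [h] at this; linarith
  have hnozero : ∀ r ∈ Set.Icc 0 T, X' r ≠ 0 := by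
    intro r hr h0
    have := hbound r hr
    rw [h0, abs_zero] at this
    linarith
  have hzero_cross : ∀ a ∈ Set.Icc (0:ℝ) T, ∀ b ∈ Set.Icc (0:ℝ) T,
      0 < X' a → X' b < 0 → False := by
    intro a ha b hb hfa hfb
    have hsub : Set.uIcc a b ⊆ Set.Icc 0 T := Set.ordConnected_Icc.uIcc_subset ha hb
    have hivt := intermediate_value_uIcc (hXcont.mono hsub)
    have h0mem : (0:ℝ) ∈ Set.uIcc (X' a) (X' b) := by
      rw [Set.mem_uIcc]; right; exact ⟨hfb.le, hfa.le⟩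
    obtain ⟨x, hx, hx0⟩ := hivt h0mem
    exact hnozero x (hsub hx) hx0
  have hdicho : (∀ r ∈ Set.Icc 0 T, c ≤ X' r) ∨ (∀ r ∈ Set.Icc 0 T, X' r ≤ -c) := by
    rcases hcases 0 h0T with h0 | h0
    · left
      intro r hr
      rcases hcases r hr with h | h
      · exact h
      · exact absurd (hzero_cross 0 h0T r hr (by linarith) (by linarith)) not_false
    · right
      intro r hr
      rcases hcases r hr with h | h
      · exact absurd (hzero_cross r hr 0 h0T (by linarith) (by linarith)) not_false
      · exact h
  intro s t hs hst ht
  rcases hdicho with hpos | hneg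
  · exact core_estimate T c θE θt C₀ hc hθE hθt hC₀ X X' E hderiv hXcont hpos hEcont hE
      s t hs hst ht
  · apply core_estimate T c θE θt C₀ hc hθE hθt hC₀ (fun r => -X r) (fun r => -X' r) E
      (fun r hr => (hderiv r hr).neg) hXcont.neg
      (fun r hr => by have := hneg r hr; show c ≤ -X' r; linarith) hEcont
      (fun r hr => by simpa [abs_neg] using hE r hr) s t hs hst ht
end

section
/- Let U, P, G : [0,T] → [0,∞) be continuous, and suppose there are constants C ≥ 1, θ > 0 such that (i) P(t) ≤ C e^{−θt} V₀ + C ∫_0^t e^{−θ(t−s)} G(s) ds and (ii) U(t) ≤ C e^{−θt} V₀ + C ∫_0^t e^{−θ(t−s)} (P(s) + G(s)) ds for all t ∈ [0,T], where V₀ ≥ 0. Then there exists a constant C' depending only on C and θ such that U(t) ≤ C' e^{−(θ/2)t} V₀ + C' ∫_0^t e^{−(θ/2)(t−s)} G(s) ds for all t ∈ [0,T]. -/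
set_option maxHeartbeats 1000000

open Real MeasureTheory intervalIntegral

-- ∫_0^t exp(c s) ds
private lemma exp_int (c t : ℝ) (hc : c ≠ 0) :
    ∫ s in (0:ℝ)..t, Real.exp (c * s) = (Real.exp (c * t) - 1) / c := by
  have hder : ∀ s ∈ Set.uIcc (0:ℝ) t,
      HasDerivAt (fun x => Real.exp (c * x) / c) (Real.exp (c * s)) s := by
    intro s _
    have h := ((Real.hasDerivAt_exp (c * s)).comp s ((hasDerivAt_id s).const_mul c)).div_const c
    refine h.congr_deriv ?_
    field_simp
  have hcont : IntervalIntegrable (fun s => Real.exp (c * s)) volume 0 t :=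
    (Real.continuous_exp.comp (continuous_const.mul continuous_id)).intervalIntegrable 0 t
  have := intervalIntegral.integral_eq_sub_of_hasDerivAt hder hcont
  rw [this]
  simp [mul_zero, Real.exp_zero]
  ring

-- Lemma A: shifting decay rate from θ to θ/2
private lemma lemA {θ : ℝ} (hθ : 0 < θ) {t : ℝ} (ht : 0 ≤ t) {f : ℝ → ℝ}
    (hf : ContinuousOn f (Set.Icc 0 t)) (hfnn : ∀ s ∈ Set.Icc (0:ℝ) t, 0 ≤ f s) :
    ∫ s in (0:ℝ)..t, Real.exp (-θ * (t - s)) * f s ≤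
      Real.exp (-(θ/2) * t) * ∫ s in (0:ℝ)..t, Real.exp (θ/2 * s) * f s := by
  have huIcc : Set.uIcc (0:ℝ) t = Set.Icc 0 t := Set.uIcc_of_le ht
  have h1 : IntervalIntegrable (fun s => Real.exp (-θ * (t - s)) * f s) volume 0 t := by
    apply ContinuousOn.intervalIntegrable
    rw [huIcc]
    exact (Real.continuous_exp.comp (by fun_prop)).continuousOn.mul hf
  have h2 : IntervalIntegrable (fun s => Real.exp (-(θ/2) * t) * (Real.exp (θ/2 * s) * f s)) volume 0 t := by
    apply ContinuousOn.intervalIntegrable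
    rw [huIcc]
    exact continuousOn_const.mul ((Real.continuous_exp.comp (by fun_prop)).continuousOn.mul hf)
  rw [← intervalIntegral.integral_const_mul]
  apply intervalIntegral.integral_mono_on ht h1 h2
  intro s hs
  rw [← mul_assoc, ← Real.exp_add]
  apply mul_le_mul_of_nonneg_right _ (hfnn s hs)
  apply Real.exp_le_exp.mpr
  nlinarith [hs.1, hs.2]

theorem slaving_estimate
    (C θ : ℝ) (hC : 1 ≤ C) (hθ : 0 < θ) :
    ∃ C' : ℝ, 0 < C' ∧
      ∀ (T V₀ : ℝ), 0 ≤ T → 0 ≤ V₀ →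
      ∀ U P G : ℝ → ℝ,
        ContinuousOn U (Set.Icc 0 T) → (∀ t ∈ Set.Icc 0 T, 0 ≤ U t) →
        ContinuousOn P (Set.Icc 0 T) → (∀ t ∈ Set.Icc 0 T, 0 ≤ P t) →
        ContinuousOn G (Set.Icc 0 T) → (∀ t ∈ Set.Icc 0 T, 0 ≤ G t) →
        (∀ t ∈ Set.Icc 0 T,
          P t ≤ C * Real.exp (-θ * t) * V₀ +
            C * ∫ s in (0:ℝ)..t, Real.exp (-θ * (t - s)) * G s) →
        (∀ t ∈ Set.Icc 0 T,
          U t ≤ C * Real.exp (-θ * t) * V₀ +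
            C * ∫ s in (0:ℝ)..t, Real.exp (-θ * (t - s)) * (P s + G s)) →
        ∀ t ∈ Set.Icc 0 T,
          U t ≤ C' * Real.exp (-(θ / 2) * t) * V₀ +
            C' * ∫ s in (0:ℝ)..t, Real.exp (-(θ / 2) * (t - s)) * G s := by
  refine ⟨2 * C + 2 * C ^ 2 / θ, by positivity, ?_⟩
  intro T V₀ hT hV₀ U P G hUc hUnn hPc hPnn hGc hGnn hP hU t ht
  obtain ⟨ht0, htT⟩ := ht
  set c := θ / 2 with hc
  have hc0 : 0 < c := by positivity
  -- subset facts
  have hsub : Set.Icc (0:ℝ) t ⊆ Set.Icc 0 T := Set.Icc_subset_Icc le_rfl htT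
  have hGc' : ContinuousOn G (Set.Icc 0 t) := hGc.mono hsub
  have hGnn' : ∀ s ∈ Set.Icc (0:ℝ) t, 0 ≤ G s := fun s hs => hGnn s (hsub hs)
  set Ht := ∫ s in (0:ℝ)..t, Real.exp (c * s) * G s with hHt
  have hHtnn : 0 ≤ Ht := by
    apply intervalIntegral.integral_nonneg ht0
    intro s hs
    exact mul_nonneg (Real.exp_nonneg _) (hGnn' s hs)
  -- monotonicity of H
  have hHmono : ∀ s ∈ Set.Icc (0:ℝ) t,
      (∫ r in (0:ℝ)..s, Real.exp (c * r) * G r) ≤ Ht := by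
    intro s hs
    have hint : IntervalIntegrable (fun r => Real.exp (c * r) * G r) volume 0 t := by
      apply ContinuousOn.intervalIntegrable
      rw [Set.uIcc_of_le ht0]
      exact (Real.continuous_exp.comp (by fun_prop)).continuousOn.mul hGc'
    rw [hHt, ← intervalIntegral.integral_add_adjacent_intervals
      (hint.mono_set (Set.uIcc_subset_uIcc Set.left_mem_uIcc
        (by rw [Set.uIcc_of_le ht0]; exact hs)))
      (hint.mono_set (Set.uIcc_subset_uIcc (by rw [Set.uIcc_of_le ht0]; exact hs)
        Set.right_mem_uIcc))]
    have : 0 ≤ ∫ r in s..t, Real.exp (c * r) * G r := by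
      apply intervalIntegral.integral_nonneg hs.2
      intro r hr
      exact mul_nonneg (Real.exp_nonneg _) (hGnn' r ⟨le_trans hs.1 hr.1, hr.2⟩)
    linarith
  -- bound on P
  have hPbound : ∀ s ∈ Set.Icc (0:ℝ) t,
      P s ≤ C * Real.exp (-c * s) * (V₀ + Ht) := by
    intro s hs
    have h1 := hP s (hsub hs)
    have h2 : (∫ r in (0:ℝ)..s, Real.exp (-θ * (s - r)) * G r) ≤
        Real.exp (-c * s) * ∫ r in (0:ℝ)..s, Real.exp (c * r) * G r := by
      have := lemA hθ hs.1 (hGc'.mono (Set.Icc_subset_Icc le_rfl hs.2))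
        (fun r hr => hGnn' r ⟨hr.1, le_trans hr.2 hs.2⟩)
      simpa [hc] using this
    have h3 : Real.exp (-θ * s) ≤ Real.exp (-c * s) := by
      apply Real.exp_le_exp.mpr
      nlinarith [hs.1]
    have h4 := hHmono s hs
    have hexp : 0 ≤ Real.exp (-c * s) := Real.exp_nonneg _
    calc P s ≤ C * Real.exp (-θ * s) * V₀ + C * ∫ r in (0:ℝ)..s, Real.exp (-θ * (s - r)) * G r := h1
      _ ≤ C * Real.exp (-c * s) * V₀ + C * (Real.exp (-c * s) * Ht) := by
          have hC0 : (0:ℝ) ≤ C := by linarith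
          have h5 : (∫ r in (0:ℝ)..s, Real.exp (-θ * (s - r)) * G r) ≤ Real.exp (-c * s) * Ht :=
            h2.trans (mul_le_mul_of_nonneg_left h4 hexp)
          have h6 := mul_le_mul_of_nonneg_left h3 (mul_nonneg hC0 hV₀)
          have h7 := mul_le_mul_of_nonneg_left h5 hC0
          nlinarith
      _ = C * Real.exp (-c * s) * (V₀ + Ht) := by ring
  -- integrability
  have hC0 : (0:ℝ) ≤ C := by linarith
  have hPc' : ContinuousOn P (Set.Icc 0 t) := hPc.mono hsub
  have huIcc : Set.uIcc (0:ℝ) t = Set.Icc 0 t := Set.uIcc_of_le ht0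
  have hintP : IntervalIntegrable (fun s => Real.exp (-θ * (t - s)) * P s) volume 0 t := by
    apply ContinuousOn.intervalIntegrable
    rw [huIcc]
    exact (Real.continuous_exp.comp (by fun_prop)).continuousOn.mul hPc'
  have hintG : IntervalIntegrable (fun s => Real.exp (-θ * (t - s)) * G s) volume 0 t := by
    apply ContinuousOn.intervalIntegrable
    rw [huIcc]
    exact (Real.continuous_exp.comp (by fun_prop)).continuousOn.mul hGc'
  have hsplit : (∫ s in (0:ℝ)..t, Real.exp (-θ * (t - s)) * (P s + G s))
      = (∫ s in (0:ℝ)..t, Real.exp (-θ * (t - s)) * P s)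
        + ∫ s in (0:ℝ)..t, Real.exp (-θ * (t - s)) * G s := by
    rw [← intervalIntegral.integral_add hintP hintG]
    apply intervalIntegral.integral_congr
    intro s _
    ring
  have hIG : (∫ s in (0:ℝ)..t, Real.exp (-θ * (t - s)) * G s)
      ≤ Real.exp (-c * t) * Ht := by
    rw [hHt]
    simpa [hc] using lemA hθ ht0 hGc' hGnn'
  -- the key exponential integral bound
  have hJ : (∫ s in (0:ℝ)..t, Real.exp (-θ * (t - s)) * Real.exp (-c * s))
      ≤ Real.exp (-c * t) / c := by
    have heq : (∫ s in (0:ℝ)..t, Real.exp (-θ * (t - s)) * Real.exp (-c * s))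
        = Real.exp (-θ * t) * ((Real.exp (c * t) - 1) / c) := by
      rw [← exp_int c t (ne_of_gt hc0), ← intervalIntegral.integral_const_mul]
      apply intervalIntegral.integral_congr
      intro s _
      simp only [← Real.exp_add]
      congr 1
      rw [hc]; ring
    rw [heq]
    have h1 : Real.exp (-θ * t) * ((Real.exp (c * t) - 1) / c)
        ≤ Real.exp (-θ * t) * (Real.exp (c * t) / c) := by
      apply mul_le_mul_of_nonneg_left _ (Real.exp_nonneg _)
      exact (div_le_div_iff_of_pos_right hc0).mpr (by linarith)
    have h2 : Real.exp (-θ * t) * (Real.exp (c * t) / c) = Real.exp (-c * t) / c := by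
      rw [mul_div_assoc', ← Real.exp_add]
      congr 2
      rw [hc]; ring
    linarith
  -- bound on the P-integral
  have hintPb : IntervalIntegrable
      (fun s => Real.exp (-θ * (t - s)) * (C * Real.exp (-c * s) * (V₀ + Ht))) volume 0 t := by
    apply ContinuousOn.intervalIntegrable
    rw [huIcc]
    exact ((Real.continuous_exp.comp (by fun_prop)).mul
      ((continuous_const.mul (Real.continuous_exp.comp (by fun_prop))).mul
        continuous_const)).continuousOn
  have hIP : (∫ s in (0:ℝ)..t, Real.exp (-θ * (t - s)) * P s)
      ≤ C * (V₀ + Ht) * (Real.exp (-c * t) / c) := by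
    have hmono : (∫ s in (0:ℝ)..t, Real.exp (-θ * (t - s)) * P s)
        ≤ ∫ s in (0:ℝ)..t, Real.exp (-θ * (t - s)) * (C * Real.exp (-c * s) * (V₀ + Ht)) := by
      apply intervalIntegral.integral_mono_on ht0 hintP hintPb
      intro s hs
      exact mul_le_mul_of_nonneg_left (hPbound s hs) (Real.exp_nonneg _)
    have heq2 : (∫ s in (0:ℝ)..t, Real.exp (-θ * (t - s)) * (C * Real.exp (-c * s) * (V₀ + Ht)))
        = C * (V₀ + Ht) * ∫ s in (0:ℝ)..t, Real.exp (-θ * (t - s)) * Real.exp (-c * s) := by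
      rw [← intervalIntegral.integral_const_mul]
      apply intervalIntegral.integral_congr
      intro s _
      ring
    have hb := mul_le_mul_of_nonneg_left hJ (by positivity : (0:ℝ) ≤ C * (V₀ + Ht))
    rw [heq2] at hmono
    linarith
  -- rewrite the target integral
  have htarget : (∫ s in (0:ℝ)..t, Real.exp (-c * (t - s)) * G s)
      = Real.exp (-c * t) * Ht := by
    rw [hHt, ← intervalIntegral.integral_const_mul]
    apply intervalIntegral.integral_congr
    intro s _
    simp only [← mul_assoc, ← Real.exp_add]
    congr 2
    ring
  -- finish
  have hfinal := hU t ⟨ht0, htT⟩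
  rw [hsplit] at hfinal
  rw [htarget]
  set E := Real.exp (-c * t) with hE
  have hEnn : 0 ≤ E := Real.exp_nonneg _
  have hexpt : Real.exp (-θ * t) ≤ E := by
    rw [hE]
    apply Real.exp_le_exp.mpr
    nlinarith
  have hmid : U t ≤ C * E * V₀ + C * (C * (V₀ + Ht) * (E / c) + E * Ht) := by
    have h7 := mul_le_mul_of_nonneg_right hexpt (mul_nonneg hC0 hV₀)
    have h8 := mul_le_mul_of_nonneg_left (add_le_add hIP hIG) hC0
    nlinarith [h7, h8]
  have hstep : C * E * V₀ + C * (C * (V₀ + Ht) * (E / c) + E * Ht)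
      ≤ (2 * C + 2 * C ^ 2 / θ) * E * V₀ + (2 * C + 2 * C ^ 2 / θ) * (E * Ht) := by
    have h1 : E / c = E * (2 / θ) := by
      rw [hc]
      field_simp
    rw [h1]
    have h2 : 2 * C ^ 2 / θ = C ^ 2 * (2 / θ) := by ring
    rw [h2]
    nlinarith [mul_nonneg (mul_nonneg hC0 hEnn) hV₀, mul_nonneg (mul_nonneg hC0 hEnn) hHtnn]
  linarith
end
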